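/- arXiv:math/0002230 — 2 statements merged into one kernel-verified Lean document; each statement's English description precedes it below -/
import Mathlib

section
/- Let H be a Hopf algebra with bijective antipode S, and P an algebra with a right H-comodule algebra structure Δ_P : P → P ⊗ H. If g : H → P is a linear map satisfying g(1) = 1 and Δ_P(g(h)) = Σ g(h₂) ⊗ S(h₁)h₃ for all h ∈ H, and g is convolution invertible with inverse g⁻¹ (i.e., Σ g(h₁)g⁻¹(h₂) = Σ g⁻¹(h₁)g(h₂) = ε(h)1), then the map α : P → P defined by α(f) = Σ f₀ g(f₁) (where Δ_P(f) = Σ f₀ ⊗ f₁) is a bijective linear map satisfying Δ_P ∘ α = (α ⊗ id) ∘ Δ_P, with inverse f ↦ Σ f₀ g⁻¹(f₁). -/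
open TensorProduct

variable {k : Type*} [Field k]
variable {H : Type*} [Ring H] [HopfAlgebra k H]
variable {P : Type*} [Ring P] [Algebra k P]

/-- Convolution product of two linear maps `H →ₗ[k] P`. -/
noncomputable def conv (f g : H →ₗ[k] P) : H →ₗ[k] P :=
  LinearMap.mul' k P ∘ₗ TensorProduct.map f g ∘ₗ Coalgebra.comul

/-- The unit of the convolution algebra: `h ↦ ε(h)·1`. -/
noncomputable def convUnit : H →ₗ[k] P :=
  Algebra.linearMap k P ∘ₗ Coalgebra.counit

/-- `ΔP` makes `P` a right `H`-comodule algebra (coaction axioms + algebra map). -/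
structure IsComodAlg (ΔP : P →ₗ[k] P ⊗[k] H) : Prop where
  coassoc : (TensorProduct.assoc k P H H).toLinearMap ∘ₗ
      (TensorProduct.map ΔP LinearMap.id) ∘ₗ ΔP
    = (TensorProduct.map LinearMap.id (Coalgebra.comul : H →ₗ[k] H ⊗[k] H)) ∘ₗ ΔP
  counit : (TensorProduct.rid k P).toLinearMap ∘ₗ
      (TensorProduct.map LinearMap.id (Coalgebra.counit : H →ₗ[k] k)) ∘ₗ ΔP
    = LinearMap.id
  map_mul : ∀ f g : P, ΔP (f * g) = ΔP f * ΔP g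
  map_one : ΔP 1 = 1

/-- The linear map `h ↦ Σ g(h₂) ⊗ S(h₁)h₃` on `H`. -/
noncomputable def adCoact (g : H →ₗ[k] P) : H →ₗ[k] P ⊗[k] H :=
  (TensorProduct.map g
      (LinearMap.mul' k H ∘ₗ
        TensorProduct.map (HopfAlgebra.antipode (R := k)) LinearMap.id)) ∘ₗ
    (TensorProduct.assoc k H H H).toLinearMap ∘ₗ
    (TensorProduct.map (TensorProduct.comm k H H).toLinearMap LinearMap.id) ∘ₗ
    (TensorProduct.map (Coalgebra.comul : H →ₗ[k] H ⊗[k] H) LinearMap.id) ∘ₗ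
    (Coalgebra.comul : H →ₗ[k] H ⊗[k] H)

/-- `α(f) = Σ f₀ · g(f₁)`. -/
noncomputable def act (ΔP : P →ₗ[k] P ⊗[k] H) (g : H →ₗ[k] P) : P →ₗ[k] P :=
  LinearMap.mul' k P ∘ₗ TensorProduct.map LinearMap.id g ∘ₗ ΔP

section Aux
open Coalgebra

variable (k H P)

/-- generic convolution -/
noncomputable def cvv {A : Type*} [Ring A] [Algebra k A] (f g : H →ₗ[k] A) : H →ₗ[k] A :=
  LinearMap.mul' k A ∘ₗ TensorProduct.map f g ∘ₗ Coalgebra.comul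

noncomputable def cuu {A : Type*} [Ring A] [Algebra k A] : H →ₗ[k] A :=
  Algebra.linearMap k A ∘ₗ Coalgebra.counit

variable {k H P}
variable {A : Type*} [Ring A] [Algebra k A]

lemma cvv_repr (f g : H →ₗ[k] A) (h : H) {ι : Type*} (r : Coalgebra.Repr k h ι) :
    cvv k H f g h = ∑ i ∈ r.index, f (r.left i) * g (r.right i) := by
  simp [cvv, ← r.eq, map_sum]

lemma cvv_unit_left (f : H →ₗ[k] A) : cvv k H (cuu k H) f = f := by
  ext h
  set r := Coalgebra.Repr.arbitrary k h with hrdef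
  have key : ∑ i ∈ r.index, counit (R := k) (r.left i) ⊗ₜ[k] r.right i = (1 : k) ⊗ₜ[k] h := by
    have h0 := rTensor_counit_comul (R := k) h
    rw [← r.eq] at h0
    simpa only [map_sum, LinearMap.rTensor_tmul] using h0
  have key2 := congrArg (⇑(TensorProduct.lid k H)) key
  simp only [map_sum, TensorProduct.lid_tmul, one_smul] at key2
  rw [cvv_repr _ _ h r]
  simp only [cuu, LinearMap.coe_comp, Function.comp_apply, Algebra.linearMap_apply,
    ← Algebra.smul_def, ← map_smul, ← map_sum]
  rw [key2]

lemma cvv_unit_right (f : H →ₗ[k] A) : cvv k H f (cuu k H) = f := by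
  ext h
  set r := Coalgebra.Repr.arbitrary k h with hrdef
  have key : ∑ i ∈ r.index, r.left i ⊗ₜ[k] counit (R := k) (r.right i) = h ⊗ₜ[k] (1 : k) := by
    have h0 := lTensor_counit_comul (R := k) h
    rw [← r.eq] at h0
    simpa only [map_sum, LinearMap.lTensor_tmul] using h0
  have key2 := congrArg (⇑(TensorProduct.rid k H)) key
  simp only [map_sum, TensorProduct.rid_tmul, one_smul] at key2
  rw [cvv_repr _ _ h r]
  simp only [cuu, LinearMap.coe_comp, Function.comp_apply, Algebra.linearMap_apply,
    ← Algebra.commutes, ← Algebra.smul_def, ← map_smul, ← map_sum]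
  rw [key2]

lemma cvv_assoc (f g h' : H →ₗ[k] A) :
    cvv k H (cvv k H f g) h' = cvv k H f (cvv k H g h') := by
  ext x
  set r := Coalgebra.Repr.arbitrary k x with hr
  set rl : ∀ i, Coalgebra.Repr k (r.left i) (H × H) := fun i => Coalgebra.Repr.arbitrary k (r.left i) with hrl
  set rr : ∀ i, Coalgebra.Repr k (r.right i) (H × H) := fun i => Coalgebra.Repr.arbitrary k (r.right i) with hrr
  have key := congrArg (⇑(LinearMap.mul' k A ∘ₗ
      TensorProduct.map f (LinearMap.mul' k A ∘ₗ TensorProduct.map g h')))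
    (sum_tmul_tmul_eq r rl rr)
  simp only [map_sum, LinearMap.coe_comp, Function.comp_apply, TensorProduct.map_tmul,
    LinearMap.mul'_apply] at key
  rw [cvv_repr _ _ x r, cvv_repr _ _ x r]
  have h1 : ∀ i, cvv k H f g (r.left i) =
      ∑ j ∈ (rl i).index, f ((rl i).left j) * g ((rl i).right j) :=
    fun i => cvv_repr f g _ (rl i)
  have h2 : ∀ i, cvv k H g h' (r.right i) =
      ∑ j ∈ (rr i).index, g ((rr i).left j) * h' ((rr i).right j) :=
    fun i => cvv_repr g h' _ (rr i)
  simp only [h1, h2, Finset.sum_mul, Finset.mul_sum, mul_assoc]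
  exact key

variable (k H P)

/-- `h ↦ 1 ⊗ h`. -/
noncomputable def wP : H →ₗ[k] P ⊗[k] H := TensorProduct.mk k P H 1

/-- `h ↦ 1 ⊗ S h`. -/
noncomputable def uP : H →ₗ[k] P ⊗[k] H := wP k H P ∘ₗ HopfAlgebra.antipode (R := k)

/-- `p ↦ p ⊗ 1`. -/
noncomputable def rhoP : P →ₗ[k] P ⊗[k] H := (TensorProduct.mk k P H).flip 1

variable {k H P}

@[simp] lemma wP_apply (h : H) : wP k H P h = (1 : P) ⊗ₜ[k] h := rfl
@[simp] lemma uP_apply (h : H) :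
    uP k H P h = (1 : P) ⊗ₜ[k] (HopfAlgebra.antipode (R := k) h) := rfl
@[simp] lemma rhoP_apply (p : P) : rhoP k H P p = p ⊗ₜ[k] (1 : H) := rfl

lemma cuu_PH (h : H) :
    (cuu k H : H →ₗ[k] P ⊗[k] H) h
      = (algebraMap k P (counit (R := k) h)) ⊗ₜ[k] (1 : H) := by
  simp [cuu, Algebra.TensorProduct.algebraMap_apply]

lemma cv_w_u : cvv k H (wP k H P) (uP k H P) = cuu k H := by
  ext h
  set r := Coalgebra.Repr.arbitrary k h with hrdef
  have h0 := HopfAlgebra.mul_antipode_lTensor_comul_apply (R := k) h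
  rw [← r.eq] at h0
  simp only [map_sum, LinearMap.lTensor_tmul, LinearMap.mul'_apply] at h0
  rw [cvv_repr _ _ h r, cuu_PH]
  simp only [wP_apply, uP_apply, Algebra.TensorProduct.tmul_mul_tmul, one_mul]
  rw [← TensorProduct.tmul_sum, h0]
  rw [Algebra.algebraMap_eq_smul_one, Algebra.algebraMap_eq_smul_one,
    TensorProduct.tmul_smul, TensorProduct.smul_tmul']

lemma cv_u_w : cvv k H (uP k H P) (wP k H P) = cuu k H := by
  ext h
  set r := Coalgebra.Repr.arbitrary k h with hrdef
  have h0 := HopfAlgebra.mul_antipode_rTensor_comul_apply (R := k) h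
  rw [← r.eq] at h0
  simp only [map_sum, LinearMap.rTensor_tmul, LinearMap.mul'_apply] at h0
  rw [cvv_repr _ _ h r, cuu_PH]
  simp only [wP_apply, uP_apply, Algebra.TensorProduct.tmul_mul_tmul, one_mul]
  rw [← TensorProduct.tmul_sum, h0]
  rw [Algebra.algebraMap_eq_smul_one, Algebra.algebraMap_eq_smul_one,
    TensorProduct.tmul_smul, TensorProduct.smul_tmul']

lemma conv_eq_cvv (a b : H →ₗ[k] P) : conv a b = cvv k H a b := rfl

lemma cv_rho (a b : H →ₗ[k] P) :
    cvv k H (rhoP k H P ∘ₗ a) (rhoP k H P ∘ₗ b) = rhoP k H P ∘ₗ conv a b := by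
  ext h
  set r := Coalgebra.Repr.arbitrary k h with hrdef
  rw [cvv_repr _ _ h r, LinearMap.comp_apply, conv_eq_cvv, cvv_repr _ _ h r, map_sum]
  simp [Algebra.TensorProduct.tmul_mul_tmul]

lemma rho_convUnit : rhoP k H P ∘ₗ (convUnit : H →ₗ[k] P) = cuu k H := by
  ext h
  rw [LinearMap.comp_apply, cuu_PH]
  simp [convUnit]

/-- Key structural identity: `adCoact a = u * (ρ∘a) * w` in the convolution monoid. -/
lemma adCoact_eq (a : H →ₗ[k] P) :
    adCoact a = cvv k H (uP k H P) (cvv k H (rhoP k H P ∘ₗ a) (wP k H P)) := by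
  ext h
  set r := Coalgebra.Repr.arbitrary k h with hr
  set rl : ∀ i, Coalgebra.Repr k (r.left i) (H × H) := fun i => Coalgebra.Repr.arbitrary k (r.left i) with hrl
  set rr : ∀ i, Coalgebra.Repr k (r.right i) (H × H) := fun i => Coalgebra.Repr.arbitrary k (r.right i) with hrr
  -- LHS evaluation
  have hL : adCoact a h = ∑ i ∈ r.index, ∑ j ∈ (rl i).index,
      a ((rl i).right j) ⊗ₜ[k]
        (HopfAlgebra.antipode (R := k) ((rl i).left j) * r.right i) := by
    simp only [adCoact, LinearMap.coe_comp, Function.comp_apply]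
    rw [← r.eq, map_sum]
    have e : ∀ i ∈ r.index,
        (TensorProduct.map (Coalgebra.comul (R := k)) LinearMap.id)
          (r.left i ⊗ₜ[k] r.right i)
        = ∑ j ∈ (rl i).index,
            ((rl i).left j ⊗ₜ[k] (rl i).right j) ⊗ₜ[k] r.right i := by
      intro i _
      rw [TensorProduct.map_tmul, LinearMap.id_coe, id_eq, ← (rl i).eq,
        TensorProduct.sum_tmul]
    rw [Finset.sum_congr rfl e]
    simp only [map_sum, TensorProduct.map_tmul, TensorProduct.assoc_tmul,
      TensorProduct.comm_tmul, LinearMap.id_coe, id_eq, LinearEquiv.coe_coe,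
      LinearMap.coe_comp, Function.comp_apply, LinearMap.mul'_apply]
  -- RHS evaluation
  have hR : cvv k H (uP k H P) (cvv k H (rhoP k H P ∘ₗ a) (wP k H P)) h
      = ∑ i ∈ r.index, ∑ j ∈ (rr i).index,
        a ((rr i).left j) ⊗ₜ[k]
          (HopfAlgebra.antipode (R := k) (r.left i) * (rr i).right j) := by
    rw [cvv_repr _ _ h r]
    have e : ∀ i, cvv k H (rhoP k H P ∘ₗ a) (wP k H P) (r.right i)
        = ∑ j ∈ (rr i).index, a ((rr i).left j) ⊗ₜ[k] (rr i).right j := by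
      intro i
      rw [cvv_repr _ _ _ (rr i)]
      simp [Algebra.TensorProduct.tmul_mul_tmul]
    simp only [e, Finset.mul_sum, uP_apply, Algebra.TensorProduct.tmul_mul_tmul, one_mul]
  rw [hL, hR]
  -- bridge via coassociativity
  have key := congrArg (⇑((TensorProduct.map a
        (LinearMap.mul' k H ∘ₗ
          TensorProduct.map (HopfAlgebra.antipode (R := k)) LinearMap.id)) ∘ₗ
      (TensorProduct.assoc k H H H).toLinearMap ∘ₗ
      (TensorProduct.map (TensorProduct.comm k H H).toLinearMap LinearMap.id) ∘ₗ
      (TensorProduct.assoc k H H H).symm.toLinearMap))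
    (sum_tmul_tmul_eq r rl rr)
  simpa only [map_sum, LinearMap.coe_comp, Function.comp_apply, LinearEquiv.coe_coe,
    TensorProduct.assoc_symm_tmul, TensorProduct.map_tmul, TensorProduct.comm_tmul,
    TensorProduct.assoc_tmul, LinearMap.id_coe, id_eq, LinearMap.mul'_apply] using key

lemma adCoact_cv (a b : H →ₗ[k] P) (hab : conv a b = convUnit) :
    cvv k H (adCoact a) (adCoact b) = cuu k H := by
  rw [adCoact_eq a, adCoact_eq b]
  rw [cvv_assoc (uP k H P), cvv_assoc (rhoP k H P ∘ₗ a), ← cvv_assoc (wP k H P),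
    cv_w_u, cvv_unit_left, ← cvv_assoc (rhoP k H P ∘ₗ a), cv_rho, hab, rho_convUnit,
    cvv_unit_left, cv_u_w]

variable (ΔP : P →ₗ[k] P ⊗[k] H) (hP : IsComodAlg ΔP)

lemma cv_Delta (hP : IsComodAlg ΔP) (a b : H →ₗ[k] P) :
    cvv k H (ΔP ∘ₗ a) (ΔP ∘ₗ b) = ΔP ∘ₗ conv a b := by
  ext h
  set r := Coalgebra.Repr.arbitrary k h with hrdef
  rw [cvv_repr _ _ h r, LinearMap.comp_apply, conv_eq_cvv, cvv_repr _ _ h r, map_sum]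
  simp [hP.map_mul]

lemma Delta_convUnit (hP : IsComodAlg ΔP) :
    ΔP ∘ₗ (convUnit : H →ₗ[k] P) = cuu k H := by
  ext h
  rw [LinearMap.comp_apply]
  simp only [convUnit, cuu, LinearMap.coe_comp, Function.comp_apply,
    Algebra.linearMap_apply, Algebra.algebraMap_eq_smul_one, map_smul, hP.map_one]

/-- coassociativity, restated. -/
lemma coassoc' (hP : IsComodAlg ΔP) :
    TensorProduct.map ΔP LinearMap.id ∘ₗ ΔP
      = (TensorProduct.assoc k P H H).symm.toLinearMap ∘ₗ
        TensorProduct.map LinearMap.id (Coalgebra.comul : H →ₗ[k] H ⊗[k] H) ∘ₗ ΔP := by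
  rw [← hP.coassoc]
  refine LinearMap.ext fun f => ?_
  simp only [LinearMap.coe_comp, Function.comp_apply, LinearEquiv.coe_coe,
    LinearEquiv.symm_apply_apply]

lemma colin (hP : IsComodAlg ΔP) (a : H →ₗ[k] P) (ha : ΔP ∘ₗ a = adCoact a) :
    ΔP ∘ₗ act ΔP a = TensorProduct.map (act ΔP a) LinearMap.id ∘ₗ ΔP := by
  have stepA : ΔP ∘ₗ (LinearMap.mul' k P ∘ₗ TensorProduct.map LinearMap.id a)
      = LinearMap.mul' k (P ⊗[k] H) ∘ₗ TensorProduct.map ΔP (adCoact a) := by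
    apply TensorProduct.ext'
    intro p h
    simp only [LinearMap.coe_comp, Function.comp_apply, TensorProduct.map_tmul,
      LinearMap.id_coe, id_eq, LinearMap.mul'_apply, hP.map_mul]
    rw [← LinearMap.comp_apply, ha]
  have stepD : LinearMap.mul' k (P ⊗[k] H) ∘ₗ
        TensorProduct.map LinearMap.id (adCoact a) ∘ₗ
        (TensorProduct.assoc k P H H).symm.toLinearMap ∘ₗ
        TensorProduct.map LinearMap.id (Coalgebra.comul : H →ₗ[k] H ⊗[k] H)
      = LinearMap.mul' k (P ⊗[k] H) ∘ₗ
          TensorProduct.map (rhoP k H P) (cvv k H (wP k H P) (adCoact a)) := by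
    apply TensorProduct.ext'
    intro p h
    set r := Coalgebra.Repr.arbitrary k h with hrdef
    simp only [LinearMap.coe_comp, Function.comp_apply, TensorProduct.map_tmul,
      LinearMap.id_coe, id_eq, rhoP_apply, LinearMap.mul'_apply]
    rw [cvv_repr _ _ h r, ← r.eq, TensorProduct.tmul_sum, map_sum, map_sum]
    rw [Finset.mul_sum]
    simp only [LinearEquiv.coe_coe, TensorProduct.assoc_symm_tmul,
      TensorProduct.map_tmul, LinearMap.id_coe, id_eq, LinearMap.mul'_apply, wP_apply]
    rw [map_sum]
    simp only [LinearMap.mul'_apply]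
    refine Finset.sum_congr rfl fun i _ => ?_
    rw [← mul_assoc, Algebra.TensorProduct.tmul_mul_tmul, mul_one, one_mul]
  have stepE : cvv k H (wP k H P) (adCoact a)
      = cvv k H (rhoP k H P ∘ₗ a) (wP k H P) := by
    rw [adCoact_eq a, ← cvv_assoc, cv_w_u, cvv_unit_left]
  have stepF : LinearMap.mul' k (P ⊗[k] H) ∘ₗ
        TensorProduct.map (rhoP k H P) (cvv k H (rhoP k H P ∘ₗ a) (wP k H P))
      = TensorProduct.map (LinearMap.mul' k P ∘ₗ TensorProduct.map LinearMap.id a)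
          LinearMap.id ∘ₗ
        (TensorProduct.assoc k P H H).symm.toLinearMap ∘ₗ
        TensorProduct.map LinearMap.id (Coalgebra.comul : H →ₗ[k] H ⊗[k] H) := by
    apply TensorProduct.ext'
    intro p h
    set r := Coalgebra.Repr.arbitrary k h with hrdef
    simp only [LinearMap.coe_comp, Function.comp_apply, TensorProduct.map_tmul,
      LinearMap.id_coe, id_eq, rhoP_apply, LinearMap.mul'_apply]
    rw [cvv_repr _ _ h r, ← r.eq, TensorProduct.tmul_sum, map_sum, map_sum]
    rw [Finset.mul_sum]
    simp only [LinearEquiv.coe_coe, TensorProduct.assoc_symm_tmul,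
      TensorProduct.map_tmul, LinearMap.id_coe, id_eq, LinearMap.mul'_apply,
      LinearMap.coe_comp, Function.comp_apply, wP_apply]
    refine Finset.sum_congr rfl fun i _ => ?_
    simp [Algebra.TensorProduct.tmul_mul_tmul]
  ext f
  have hco := LinearMap.congr_fun (coassoc' ΔP hP) f
  simp only [LinearMap.coe_comp, Function.comp_apply, LinearEquiv.coe_coe] at hco
  have l1 : ΔP (act ΔP a f)
      = LinearMap.mul' k (P ⊗[k] H) (TensorProduct.map ΔP (adCoact a) (ΔP f)) := by
    have := LinearMap.congr_fun stepA (ΔP f)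
    simp only [LinearMap.coe_comp, Function.comp_apply] at this
    exact this
  have l2 : TensorProduct.map ΔP (adCoact a) (ΔP f)
      = TensorProduct.map LinearMap.id (adCoact a)
          ((TensorProduct.assoc k P H H).symm
            ((TensorProduct.map LinearMap.id (Coalgebra.comul : H →ₗ[k] H ⊗[k] H))
              (ΔP f))) := by
    have hsplit : TensorProduct.map ΔP (adCoact a)
        = TensorProduct.map LinearMap.id (adCoact a) ∘ₗ
          TensorProduct.map ΔP LinearMap.id := by
      rw [← TensorProduct.map_comp, LinearMap.id_comp, LinearMap.comp_id]
    rw [hsplit, LinearMap.comp_apply, hco]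
  have l3 := LinearMap.congr_fun stepD (ΔP f)
  simp only [LinearMap.coe_comp, Function.comp_apply, LinearEquiv.coe_coe] at l3
  have l4 := LinearMap.congr_fun stepF (ΔP f)
  simp only [LinearMap.coe_comp, Function.comp_apply, LinearEquiv.coe_coe] at l4
  have hsplit2 : TensorProduct.map (act ΔP a) (LinearMap.id : H →ₗ[k] H)
      = TensorProduct.map (LinearMap.mul' k P ∘ₗ TensorProduct.map LinearMap.id a)
          LinearMap.id ∘ₗ TensorProduct.map ΔP LinearMap.id := by
    rw [← TensorProduct.map_comp, LinearMap.id_comp]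
    rfl
  simp only [LinearMap.coe_comp, Function.comp_apply]
  rw [l1, l2, l3, stepE, l4, hsplit2, LinearMap.comp_apply, hco]

lemma cancel (hP : IsComodAlg ΔP) (a b : H →ₗ[k] P) (ha : ΔP ∘ₗ a = adCoact a)
    (hab : conv a b = convUnit) : act ΔP b ∘ₗ act ΔP a = LinearMap.id := by
  have hcol := colin ΔP hP a ha
  have stepI : LinearMap.mul' k P ∘ₗ
      TensorProduct.map (LinearMap.mul' k P ∘ₗ TensorProduct.map LinearMap.id a) b ∘ₗ
      (TensorProduct.assoc k P H H).symm.toLinearMap ∘ₗ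
      TensorProduct.map LinearMap.id (Coalgebra.comul : H →ₗ[k] H ⊗[k] H)
      = LinearMap.mul' k P ∘ₗ TensorProduct.map LinearMap.id (conv a b) := by
    apply TensorProduct.ext'
    intro p h
    set r := Coalgebra.Repr.arbitrary k h with hrdef
    simp only [LinearMap.coe_comp, Function.comp_apply, TensorProduct.map_tmul,
      LinearMap.id_coe, id_eq, LinearMap.mul'_apply]
    rw [conv_eq_cvv, cvv_repr _ _ h r, ← r.eq, TensorProduct.tmul_sum, map_sum, map_sum,
      map_sum]
    simp only [LinearEquiv.coe_coe, TensorProduct.assoc_symm_tmul, TensorProduct.map_tmul,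
      LinearMap.id_coe, id_eq, LinearMap.coe_comp, Function.comp_apply, LinearMap.mul'_apply]
    rw [Finset.mul_sum]
    exact Finset.sum_congr rfl fun i _ => by rw [mul_assoc]
  have stepJ : LinearMap.mul' k P ∘ₗ TensorProduct.map LinearMap.id (convUnit : H →ₗ[k] P)
      = (TensorProduct.rid k P).toLinearMap ∘ₗ
        TensorProduct.map LinearMap.id (Coalgebra.counit : H →ₗ[k] k) := by
    apply TensorProduct.ext'
    intro p h
    simp only [LinearMap.coe_comp, Function.comp_apply, TensorProduct.map_tmul,
      LinearMap.id_coe, id_eq, LinearMap.mul'_apply, LinearEquiv.coe_coe,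
      TensorProduct.rid_tmul, convUnit, Algebra.linearMap_apply]
    rw [← Algebra.commutes, ← Algebra.smul_def]
  ext f
  have hco := LinearMap.congr_fun (coassoc' ΔP hP) f
  simp only [LinearMap.coe_comp, Function.comp_apply, LinearEquiv.coe_coe] at hco
  have l1 : act ΔP b (act ΔP a f)
      = LinearMap.mul' k P (TensorProduct.map LinearMap.id b (ΔP (act ΔP a f))) := rfl
  have l2 : ΔP (act ΔP a f) = TensorProduct.map (act ΔP a) LinearMap.id (ΔP f) := by
    have := LinearMap.congr_fun hcol f
    simpa only [LinearMap.coe_comp, Function.comp_apply] using this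
  have hsplit3 : TensorProduct.map (act ΔP a) b
      = TensorProduct.map LinearMap.id b ∘ₗ TensorProduct.map (act ΔP a) LinearMap.id := by
    rw [← TensorProduct.map_comp, LinearMap.id_comp, LinearMap.comp_id]
  have hsplit4 : TensorProduct.map (act ΔP a) b
      = TensorProduct.map (LinearMap.mul' k P ∘ₗ TensorProduct.map LinearMap.id a) b ∘ₗ
        TensorProduct.map ΔP LinearMap.id := by
    rw [← TensorProduct.map_comp, LinearMap.comp_id]
    rfl
  have l5 := LinearMap.congr_fun stepI (ΔP f)
  simp only [LinearMap.coe_comp, Function.comp_apply, LinearEquiv.coe_coe] at l5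
  have l6 := LinearMap.congr_fun stepJ (ΔP f)
  simp only [LinearMap.coe_comp, Function.comp_apply, LinearEquiv.coe_coe] at l6
  have l7 := LinearMap.congr_fun hP.counit f
  simp only [LinearMap.coe_comp, Function.comp_apply, LinearEquiv.coe_coe,
    LinearMap.id_coe, id_eq] at l7
  have l4 : (TensorProduct.map LinearMap.id b)
        ((TensorProduct.map (act ΔP a) LinearMap.id) (ΔP f))
      = (TensorProduct.map (LinearMap.mul' k P ∘ₗ TensorProduct.map LinearMap.id a) b)
          ((TensorProduct.map ΔP LinearMap.id) (ΔP f)) := by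
    rw [← LinearMap.comp_apply, ← hsplit3, hsplit4, LinearMap.comp_apply]
  simp only [LinearMap.coe_comp, Function.comp_apply, LinearMap.id_coe, id_eq]
  rw [l1, l2, l4, hco, l5, hab, l6, l7]

end Aux

theorem statement_6 (ΔP : P →ₗ[k] P ⊗[k] H) (hP : IsComodAlg ΔP)
    (hS : Function.Bijective (HopfAlgebra.antipode (R := k) (A := H)))
    (g g' : H →ₗ[k] P) (hg1 : g 1 = 1)
    (hgcoact : ΔP ∘ₗ g = adCoact g)
    (hinv : conv g g' = (convUnit : H →ₗ[k] P) ∧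
            conv g' g = (convUnit : H →ₗ[k] P)) :
    Function.Bijective (act ΔP g) ∧
    act ΔP g ∘ₗ act ΔP g' = LinearMap.id ∧
    act ΔP g' ∘ₗ act ΔP g = LinearMap.id ∧
    ΔP ∘ₗ act ΔP g = (TensorProduct.map (act ΔP g) LinearMap.id) ∘ₗ ΔP := by
  obtain ⟨hinv1, hinv2⟩ := hinv
  have e1 : cvv k H (ΔP ∘ₗ g) (ΔP ∘ₗ g') = cuu k H := by
    rw [cv_Delta ΔP hP, hinv1, Delta_convUnit ΔP hP]
  have e2 : cvv k H (adCoact g') (adCoact g) = (cuu k H : H →ₗ[k] P ⊗[k] H) :=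
    adCoact_cv g' g hinv2
  have hD : ΔP ∘ₗ g' = adCoact g' := by
    calc ΔP ∘ₗ g' = cvv k H (cuu k H) (ΔP ∘ₗ g') := (cvv_unit_left _).symm
      _ = cvv k H (cvv k H (adCoact g') (adCoact g)) (ΔP ∘ₗ g') := by rw [e2]
      _ = cvv k H (adCoact g') (cvv k H (adCoact g) (ΔP ∘ₗ g')) := cvv_assoc _ _ _
      _ = cvv k H (adCoact g') (cvv k H (ΔP ∘ₗ g) (ΔP ∘ₗ g')) := by rw [hgcoact]
      _ = cvv k H (adCoact g') (cuu k H) := by rw [e1]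
      _ = adCoact g' := cvv_unit_right _
  have h3 : act ΔP g' ∘ₗ act ΔP g = LinearMap.id := cancel ΔP hP g g' hgcoact hinv1
  have h2 : act ΔP g ∘ₗ act ΔP g' = LinearMap.id := cancel ΔP hP g' g hD hinv2
  refine ⟨?_, h2, h3, colin ΔP hP g hgcoact⟩
  exact Function.bijective_iff_has_inverse.mpr
    ⟨act ΔP g', fun f => LinearMap.congr_fun h3 f, fun f => LinearMap.congr_fun h2 f⟩
end

section
/- Let P be a right H-comodule algebra over a Hopf algebra H with bijective antipode, and let g : H → P define a left gauge transformation α (i.e., g(1)=1, Δ_P(g(h)) = Σ g(h₂) ⊗ S(h₁)h₃, g convolution invertible, α(f) = Σ f₀g(f₁)). Let D : P → M be any linear map into a P-bimodule M carrying a compatible coaction, and set D' := α ∘ D ∘ α⁻¹ (with α extended to M by m ↦ Σ m₀ g(m₁)). Then (D')² = α ∘ D² ∘ α⁻¹; in particular, if D²(f) = Σ f₀ Ω(f₁) for a linear map Ω : H → M, then (D')²(f) = Σ f₀ g⁻¹(f₁) Ω(f₂) g(f₃), i.e., the curvature transforms as Ω'(h) = Σ g⁻¹(h₁) Ω(h₂)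 g(h₃). -/
open TensorProduct

variable {k : Type*} [Field k]
variable {H : Type*} [Ring H] [HopfAlgebra k H]
variable {P : Type*} [Ring P] [Algebra k P]

variable {A B : Type*} [Ring A] [Algebra k A] [Ring B] [Algebra k B]

noncomputable def cv (X Y : H →ₗ[k] A) : H →ₗ[k] A :=
  LinearMap.mul' k A ∘ₗ TensorProduct.map X Y ∘ₗ Coalgebra.comul

noncomputable def cu : H →ₗ[k] A :=
  Algebra.linearMap k A ∘ₗ Coalgebra.counit

-- E1
lemma E1 {V W U : Type*} [AddCommMonoid V] [Module k V] [AddCommMonoid W] [Module k W]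
    [AddCommMonoid U] [Module k U] (f : V →ₗ[k] A) (g : W →ₗ[k] A) (h : U →ₗ[k] A) :
    LinearMap.mul' k A ∘ₗ TensorProduct.map (LinearMap.mul' k A ∘ₗ TensorProduct.map f g) h ∘ₗ
      (TensorProduct.assoc k V W U).symm.toLinearMap
    = LinearMap.mul' k A ∘ₗ TensorProduct.map f (LinearMap.mul' k A ∘ₗ TensorProduct.map g h) := by
  apply TensorProduct.ext'
  intro v w
  induction w using TensorProduct.induction_on with
  | zero => simp
  | tmul x y => simp [mul_assoc]
  | add x y hx hy => simp_all [tmul_add]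

-- E2
lemma E2 (φ : A →ₗ[k] B) (hφ : ∀ x y, φ (x * y) = φ x * φ y) :
    φ ∘ₗ LinearMap.mul' k A = LinearMap.mul' k B ∘ₗ TensorProduct.map φ φ := by
  apply TensorProduct.ext'
  intro x y
  simp [hφ]

-- E3
lemma E3 {V : Type*} [AddCommMonoid V] [Module k V] (Φ : V →ₗ[k] A) :
    LinearMap.mul' k A ∘ₗ TensorProduct.map Φ (Algebra.linearMap k A)
    = Φ ∘ₗ (TensorProduct.rid k V).toLinearMap := by
  apply TensorProduct.ext'
  intro v c
  simp [Algebra.algebraMap_eq_smul_one]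

lemma E3' {W : Type*} [AddCommMonoid W] [Module k W] (X : W →ₗ[k] A) :
    LinearMap.mul' k A ∘ₗ TensorProduct.map (Algebra.linearMap k A) X
    = X ∘ₗ (TensorProduct.lid k W).toLinearMap := by
  apply TensorProduct.ext'
  intro c w
  simp [Algebra.algebraMap_eq_smul_one]

lemma mapL {V V' V'' W W' : Type*} [AddCommMonoid V] [Module k V] [AddCommMonoid V'] [Module k V']
    [AddCommMonoid V''] [Module k V''] [AddCommMonoid W] [Module k W] [AddCommMonoid W'] [Module k W']
    (f₁ : V →ₗ[k] V') (f₂ : V' →ₗ[k] V'') (g : W →ₗ[k] W') :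
    TensorProduct.map (f₂ ∘ₗ f₁) g = TensorProduct.map f₂ g ∘ₗ TensorProduct.map f₁ LinearMap.id := by
  rw [← TensorProduct.map_comp, LinearMap.comp_id]

lemma mapR {V V' W W' W'' : Type*} [AddCommMonoid V] [Module k V] [AddCommMonoid V'] [Module k V']
    [AddCommMonoid W] [Module k W] [AddCommMonoid W'] [Module k W'] [AddCommMonoid W''] [Module k W'']
    (f : V →ₗ[k] V') (g₁ : W →ₗ[k] W') (g₂ : W' →ₗ[k] W'') :
    TensorProduct.map f (g₂ ∘ₗ g₁) = TensorProduct.map f g₂ ∘ₗ TensorProduct.map LinearMap.id g₁ := by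
  rw [← TensorProduct.map_comp, LinearMap.comp_id]

lemma cv_assoc (X Y Z : H →ₗ[k] A) : cv (cv X Y) Z = cv X (cv Y Z) := by
  have h1 : (TensorProduct.map (Coalgebra.comul (R := k) (A := H)) LinearMap.id) ∘ₗ
      (Coalgebra.comul (R := k) (A := H)) =
      (TensorProduct.assoc k H H H).symm.toLinearMap ∘ₗ
        (TensorProduct.map LinearMap.id Coalgebra.comul) ∘ₗ Coalgebra.comul := by
    have := Coalgebra.coassoc_symm (R := k) (A := H)
    simpa [LinearMap.rTensor, LinearMap.lTensor, LinearMap.comp_assoc] using this.symm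
  calc cv (cv X Y) Z
      = LinearMap.mul' k A ∘ₗ
          TensorProduct.map (LinearMap.mul' k A ∘ₗ TensorProduct.map X Y) Z ∘ₗ
          (TensorProduct.map Coalgebra.comul LinearMap.id) ∘ₗ Coalgebra.comul := by
        simp only [cv, _root_.mapL, LinearMap.comp_assoc]
    _ = LinearMap.mul' k A ∘ₗ
          TensorProduct.map X (LinearMap.mul' k A ∘ₗ TensorProduct.map Y Z) ∘ₗ
          (TensorProduct.map LinearMap.id Coalgebra.comul) ∘ₗ Coalgebra.comul := by
        rw [h1]
        have e := E1 (A := A) X Y Z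
        simp only [← LinearMap.comp_assoc] at e ⊢
        rw [e]
    _ = cv X (cv Y Z) := by
        simp only [cv, mapR, LinearMap.comp_assoc]

lemma push_cv (φ : A →ₗ[k] B) (hφ : ∀ x y, φ (x * y) = φ x * φ y) (X Y : H →ₗ[k] A) :
    φ ∘ₗ cv X Y = cv (φ ∘ₗ X) (φ ∘ₗ Y) := by
  rw [cv, cv, TensorProduct.map_comp, ← LinearMap.comp_assoc, ← LinearMap.comp_assoc, E2 φ hφ]
  simp [LinearMap.comp_assoc]

lemma cv_cu_left (X : H →ₗ[k] A) : cv cu X = X := by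
  calc cv (cu (A := A)) X
      = LinearMap.mul' k A ∘ₗ
          TensorProduct.map (Algebra.linearMap k A) X ∘ₗ
          (TensorProduct.map Coalgebra.counit LinearMap.id) ∘ₗ Coalgebra.comul := by
        simp only [cv, cu, _root_.mapL, LinearMap.comp_assoc]
    _ = X := by
        have h2 : (TensorProduct.map (Coalgebra.counit (R := k) (A := H)) LinearMap.id) ∘ₗ
            Coalgebra.comul = TensorProduct.mk k k H 1 := by
          simpa [LinearMap.rTensor] using Coalgebra.rTensor_counit_comp_comul (R := k) (A := H)
        rw [h2, ← LinearMap.comp_assoc, E3']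
        ext h
        simp

lemma cv_cu_right (X : H →ₗ[k] A) : cv X cu = X := by
  calc cv X (cu (A := A))
      = LinearMap.mul' k A ∘ₗ
          TensorProduct.map X (Algebra.linearMap k A) ∘ₗ
          (TensorProduct.map LinearMap.id Coalgebra.counit) ∘ₗ Coalgebra.comul := by
        simp only [cv, cu, mapR, LinearMap.comp_assoc]
    _ = X := by
        have h2 : (TensorProduct.map LinearMap.id (Coalgebra.counit (R := k) (A := H))) ∘ₗ
            Coalgebra.comul = (TensorProduct.mk k H k).flip 1 := by
          simpa [LinearMap.lTensor] using Coalgebra.lTensor_counit_comp_comul (R := k) (A := H)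
        rw [h2, ← LinearMap.comp_assoc, E3]
        ext h
        simp

lemma cv_antipode_id : cv (HopfAlgebra.antipode (R := k) (A := H)) LinearMap.id = cu := by
  have := HopfAlgebra.mul_antipode_rTensor_comul (R := k) (A := H)
  simpa [cv, cu, LinearMap.rTensor, LinearMap.comp_assoc] using this

lemma cv_id_antipode : cv LinearMap.id (HopfAlgebra.antipode (R := k) (A := H)) = cu := by
  have := HopfAlgebra.mul_antipode_lTensor_comul (R := k) (A := H)
  simpa [cv, cu, LinearMap.lTensor, LinearMap.comp_assoc] using this


noncomputable def ca (ΔP : P →ₗ[k] P ⊗[k] H) (Φ : P →ₗ[k] A) (X : H →ₗ[k] A) : P →ₗ[k] A :=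
  LinearMap.mul' k A ∘ₗ TensorProduct.map Φ X ∘ₗ ΔP

variable {ΔP : P →ₗ[k] P ⊗[k] H}

lemma ca_assoc (hP : IsComodAlg ΔP) (Φ : P →ₗ[k] A) (X Y : H →ₗ[k] A) :
    ca ΔP (ca ΔP Φ X) Y = ca ΔP Φ (cv X Y) := by
  have h1 : (TensorProduct.map ΔP LinearMap.id) ∘ₗ ΔP =
      (TensorProduct.assoc k P H H).symm.toLinearMap ∘ₗ
        (TensorProduct.map LinearMap.id Coalgebra.comul) ∘ₗ ΔP := by
    rw [← hP.coassoc]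
    ext f
    simp
  calc ca ΔP (ca ΔP Φ X) Y
      = LinearMap.mul' k A ∘ₗ
          TensorProduct.map (LinearMap.mul' k A ∘ₗ TensorProduct.map Φ X) Y ∘ₗ
          (TensorProduct.map ΔP LinearMap.id) ∘ₗ ΔP := by
        simp only [ca, _root_.mapL, LinearMap.comp_assoc]
    _ = LinearMap.mul' k A ∘ₗ
          TensorProduct.map Φ (LinearMap.mul' k A ∘ₗ TensorProduct.map X Y) ∘ₗ
          (TensorProduct.map LinearMap.id Coalgebra.comul) ∘ₗ ΔP := by
        rw [h1]
        have e := E1 (A := A) Φ X Y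
        simp only [← LinearMap.comp_assoc] at e ⊢
        rw [e]
    _ = ca ΔP Φ (cv X Y) := by
        simp only [ca, cv, mapR, LinearMap.comp_assoc]

lemma push_ca (φ : A →ₗ[k] B) (hφ : ∀ x y, φ (x * y) = φ x * φ y) (Φ : P →ₗ[k] A)
    (X : H →ₗ[k] A) : φ ∘ₗ ca ΔP Φ X = ca ΔP (φ ∘ₗ Φ) (φ ∘ₗ X) := by
  rw [ca, ca, TensorProduct.map_comp, ← LinearMap.comp_assoc, ← LinearMap.comp_assoc, E2 φ hφ]
  simp [LinearMap.comp_assoc]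

lemma ca_cu (hP : IsComodAlg ΔP) (Φ : P →ₗ[k] A) : ca ΔP Φ cu = Φ := by
  calc ca ΔP Φ (cu (A := A))
      = LinearMap.mul' k A ∘ₗ
          TensorProduct.map Φ (Algebra.linearMap k A) ∘ₗ
          (TensorProduct.map LinearMap.id Coalgebra.counit) ∘ₗ ΔP := by
        simp only [ca, cu, mapR, LinearMap.comp_assoc]
    _ = Φ := by
        rw [← LinearMap.comp_assoc, E3, LinearMap.comp_assoc, hP.counit, LinearMap.comp_id]

noncomputable def jmap : P →ₗ[k] P ⊗[k] H := (TensorProduct.mk k P H).flip 1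

noncomputable def imap : H →ₗ[k] P ⊗[k] H := TensorProduct.mk k P H 1

@[simp] lemma jmap_apply (p : P) : (jmap (k := k) (H := H)) p = p ⊗ₜ[k] 1 := rfl
@[simp] lemma imap_apply (h : H) : (imap (k := k) (P := P)) h = 1 ⊗ₜ[k] h := rfl

lemma jmap_mul : ∀ x y : P, (jmap (k := k) (H := H)) (x * y) = jmap x * jmap y := by
  intro x y; simp [Algebra.TensorProduct.tmul_mul_tmul]

lemma imap_mul : ∀ x y : H, (imap (k := k) (P := P)) (x * y) = imap x * imap y := by
  intro x y; simp [Algebra.TensorProduct.tmul_mul_tmul]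

-- E4
lemma E4 : LinearMap.mul' k (P ⊗[k] H) ∘ₗ TensorProduct.map jmap imap = LinearMap.id := by
  apply TensorProduct.ext'
  intro p h
  simp [Algebra.TensorProduct.tmul_mul_tmul]

lemma jmap_cu : (jmap (k := k) (H := H) (P := P)) ∘ₗ (cu (H := H) (A := P)) = cu := by
  ext h
  simp [cu, Algebra.algebraMap_eq_smul_one, TensorProduct.smul_tmul', Algebra.TensorProduct.one_def]

lemma imap_cu : (imap (k := k) (H := H) (P := P)) ∘ₗ (cu (H := H) (A := H)) = cu := by
  ext h
  simp [cu, Algebra.algebraMap_eq_smul_one, TensorProduct.tmul_smul, Algebra.TensorProduct.one_def]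

-- factorization of adCoact
lemma adCoact_factor (b : H →ₗ[k] P) :
    adCoact b = cv (imap ∘ₗ HopfAlgebra.antipode (R := k)) (cv (jmap ∘ₗ b) imap) := by
  have hinner : cv (jmap ∘ₗ b) (imap (k := k) (P := P)) =
      TensorProduct.map b LinearMap.id ∘ₗ Coalgebra.comul := by
    rw [cv, _root_.mapL, ← LinearMap.comp_assoc, ← LinearMap.comp_assoc, E4]
    simp [LinearMap.comp_assoc]
  rw [hinner]
  have h1 : (TensorProduct.map (Coalgebra.comul (R := k) (A := H)) LinearMap.id) ∘ₗ
      (Coalgebra.comul (R := k) (A := H)) =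
      (TensorProduct.assoc k H H H).symm.toLinearMap ∘ₗ
        (TensorProduct.map LinearMap.id Coalgebra.comul) ∘ₗ Coalgebra.comul := by
    have := Coalgebra.coassoc_symm (R := k) (A := H)
    simpa [LinearMap.rTensor, LinearMap.lTensor, LinearMap.comp_assoc] using this.symm
  have key : (TensorProduct.map b (LinearMap.mul' k H ∘ₗ
        TensorProduct.map (HopfAlgebra.antipode (R := k)) LinearMap.id)) ∘ₗ
      (TensorProduct.assoc k H H H).toLinearMap ∘ₗ
      (TensorProduct.map (TensorProduct.comm k H H).toLinearMap LinearMap.id) ∘ₗ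
      (TensorProduct.assoc k H H H).symm.toLinearMap
      = LinearMap.mul' k (P ⊗[k] H) ∘ₗ
        TensorProduct.map (imap ∘ₗ HopfAlgebra.antipode (R := k))
          (TensorProduct.map b LinearMap.id) := by
    apply TensorProduct.ext'
    intro x w
    induction w using TensorProduct.induction_on with
    | zero => simp only [TensorProduct.tmul_zero, map_zero]
    | tmul y z => simp [Algebra.TensorProduct.tmul_mul_tmul]
    | add u v hu hv => simp only [TensorProduct.tmul_add, map_add, hu, hv]
  calc adCoact b
      = ((TensorProduct.map b (LinearMap.mul' k H ∘ₗ
            TensorProduct.map (HopfAlgebra.antipode (R := k)) LinearMap.id)) ∘ₗ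
          (TensorProduct.assoc k H H H).toLinearMap ∘ₗ
          (TensorProduct.map (TensorProduct.comm k H H).toLinearMap LinearMap.id) ∘ₗ
          (TensorProduct.assoc k H H H).symm.toLinearMap) ∘ₗ
          (TensorProduct.map LinearMap.id Coalgebra.comul) ∘ₗ Coalgebra.comul := by
        rw [adCoact]
        rw [LinearMap.comp_assoc, LinearMap.comp_assoc]
        rw [h1]
        simp only [LinearMap.comp_assoc]
    _ = LinearMap.mul' k (P ⊗[k] H) ∘ₗ
          TensorProduct.map (imap ∘ₗ HopfAlgebra.antipode (R := k))
            (TensorProduct.map b LinearMap.id) ∘ₗ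
          (TensorProduct.map LinearMap.id Coalgebra.comul) ∘ₗ Coalgebra.comul := by
        rw [key]
        simp only [LinearMap.comp_assoc]
    _ = cv (imap ∘ₗ HopfAlgebra.antipode (R := k))
          (TensorProduct.map b LinearMap.id ∘ₗ Coalgebra.comul) := by
        simp only [cv, mapR, LinearMap.comp_assoc]

lemma mapSplit {V V' W W' : Type*} [AddCommMonoid V] [Module k V] [AddCommMonoid V'] [Module k V']
    [AddCommMonoid W] [Module k W] [AddCommMonoid W'] [Module k W']
    (f : V →ₗ[k] V') (g : W →ₗ[k] W') :
    TensorProduct.map f g = TensorProduct.map LinearMap.id g ∘ₗ TensorProduct.map f LinearMap.id := by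
  rw [← TensorProduct.map_comp, LinearMap.comp_id, LinearMap.id_comp]

lemma L12 (hP : IsComodAlg ΔP) :
    ca (A := P ⊗[k] H) ΔP ΔP (imap ∘ₗ HopfAlgebra.antipode (R := k)) = jmap := by
  have h1 : (TensorProduct.map ΔP LinearMap.id) ∘ₗ ΔP =
      (TensorProduct.assoc k P H H).symm.toLinearMap ∘ₗ
        (TensorProduct.map LinearMap.id Coalgebra.comul) ∘ₗ ΔP := by
    rw [← hP.coassoc]; ext f; simp
  have E6 : LinearMap.mul' k (P ⊗[k] H) ∘ₗ
      TensorProduct.map LinearMap.id (imap ∘ₗ HopfAlgebra.antipode (R := k)) ∘ₗ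
      (TensorProduct.assoc k P H H).symm.toLinearMap
      = TensorProduct.map LinearMap.id
          (LinearMap.mul' k H ∘ₗ
            TensorProduct.map LinearMap.id (HopfAlgebra.antipode (R := k))) := by
    apply TensorProduct.ext'
    intro p w
    induction w using TensorProduct.induction_on with
    | zero => simp only [TensorProduct.tmul_zero, map_zero]
    | tmul x y => simp [Algebra.TensorProduct.tmul_mul_tmul]
    | add u v hu hv => simp only [TensorProduct.tmul_add, map_add, hu, hv]
  have hanti : (LinearMap.mul' k H ∘ₗ
      TensorProduct.map LinearMap.id (HopfAlgebra.antipode (R := k) (A := H))) ∘ₗ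
      Coalgebra.comul = Algebra.linearMap k H ∘ₗ Coalgebra.counit := by
    have := HopfAlgebra.mul_antipode_lTensor_comul (R := k) (A := H)
    simpa [LinearMap.lTensor, LinearMap.comp_assoc] using this
  have hcu : (TensorProduct.map LinearMap.id (Coalgebra.counit (R := k))) ∘ₗ ΔP =
      (TensorProduct.rid k P).symm.toLinearMap := by
    ext f
    apply (TensorProduct.rid k P).injective
    have := LinearMap.congr_fun hP.counit f
    simpa using this
  have E7 : (TensorProduct.map LinearMap.id (Algebra.linearMap k H)) ∘ₗ
      (TensorProduct.rid k P).symm.toLinearMap = jmap (k := k) (H := H) (P := P) := by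
    ext f
    simp [jmap, TensorProduct.rid_symm_apply, Algebra.algebraMap_eq_smul_one]
  calc ca (A := P ⊗[k] H) ΔP ΔP (imap ∘ₗ HopfAlgebra.antipode (R := k))
      = LinearMap.mul' k (P ⊗[k] H) ∘ₗ
          TensorProduct.map LinearMap.id (imap ∘ₗ HopfAlgebra.antipode (R := k)) ∘ₗ
          (TensorProduct.assoc k P H H).symm.toLinearMap ∘ₗ
          (TensorProduct.map LinearMap.id Coalgebra.comul) ∘ₗ ΔP := by
        rw [ca, mapSplit, LinearMap.comp_assoc, h1]
    _ = (TensorProduct.map LinearMap.id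
          ((LinearMap.mul' k H ∘ₗ
            TensorProduct.map LinearMap.id (HopfAlgebra.antipode (R := k))) ∘ₗ
            Coalgebra.comul)) ∘ₗ ΔP := by
        have e := E6
        simp only [← LinearMap.comp_assoc] at e ⊢
        rw [e]
        simp only [mapR, LinearMap.comp_assoc, ← LinearMap.comp_assoc]
    _ = jmap := by
        rw [hanti, mapR, LinearMap.comp_assoc, hcu, E7]

lemma L15 (T : P →ₗ[k] P) :
    ca ΔP (jmap ∘ₗ T) imap = TensorProduct.map T LinearMap.id ∘ₗ ΔP := by
  rw [ca, _root_.mapL, ← LinearMap.comp_assoc, ← LinearMap.comp_assoc, E4]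
  simp [LinearMap.comp_assoc]

lemma L16 (hP : IsComodAlg ΔP) (b : H →ₗ[k] P) (hb : ΔP ∘ₗ b = adCoact b) :
    ΔP ∘ₗ ca ΔP LinearMap.id b =
      TensorProduct.map (ca ΔP LinearMap.id b) LinearMap.id ∘ₗ ΔP := by
  calc ΔP ∘ₗ ca ΔP LinearMap.id b
      = ca ΔP ΔP (ΔP ∘ₗ b) := by
        rw [push_ca ΔP hP.map_mul, LinearMap.comp_id]
    _ = ca ΔP ΔP (cv (imap ∘ₗ HopfAlgebra.antipode (R := k)) (cv (jmap ∘ₗ b) imap)) := by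
        rw [hb, adCoact_factor]
    _ = ca ΔP (ca ΔP ΔP (imap ∘ₗ HopfAlgebra.antipode (R := k))) (cv (jmap ∘ₗ b) imap) := by
        rw [ca_assoc hP]
    _ = ca ΔP jmap (cv (jmap ∘ₗ b) imap) := by rw [L12 hP]
    _ = ca ΔP (ca ΔP jmap (jmap ∘ₗ b)) imap := by rw [ca_assoc hP]
    _ = ca ΔP (jmap ∘ₗ ca ΔP LinearMap.id b) imap := by
        have h := push_ca (ΔP := ΔP) (jmap (k := k) (P := P) (H := H)) jmap_mul LinearMap.id b
        rw [LinearMap.comp_id] at h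
        rw [h]
    _ = TensorProduct.map (ca ΔP LinearMap.id b) LinearMap.id ∘ₗ ΔP := L15 _

lemma caSplit (Φ : P →ₗ[k] P) (X : H →ₗ[k] P) :
    LinearMap.mul' k P ∘ₗ TensorProduct.map LinearMap.id X ∘ₗ
      TensorProduct.map Φ LinearMap.id ∘ₗ ΔP = ca ΔP Φ X := by
  rw [ca, mapSplit Φ X]
  simp only [LinearMap.comp_assoc]

lemma L17 (hP : IsComodAlg ΔP) (a b : H →ₗ[k] P) (hb : ΔP ∘ₗ b = adCoact b) :
    ca ΔP LinearMap.id a ∘ₗ ca ΔP LinearMap.id b = ca ΔP LinearMap.id (cv b a) := by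
  calc ca ΔP LinearMap.id a ∘ₗ ca ΔP LinearMap.id b
      = LinearMap.mul' k P ∘ₗ TensorProduct.map LinearMap.id a ∘ₗ
          (ΔP ∘ₗ ca ΔP LinearMap.id b) := by
        simp only [ca, LinearMap.comp_assoc]
    _ = LinearMap.mul' k P ∘ₗ TensorProduct.map LinearMap.id a ∘ₗ
          TensorProduct.map (ca ΔP LinearMap.id b) LinearMap.id ∘ₗ ΔP := by
        rw [L16 hP b hb]
    _ = ca ΔP (ca ΔP LinearMap.id b) a := caSplit _ _
    _ = ca ΔP LinearMap.id (cv b a) := ca_assoc hP _ _ _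

lemma L3 (hP : IsComodAlg ΔP) (g g' : H →ₗ[k] P)
    (hgcoact : ΔP ∘ₗ g = adCoact g)
    (h1 : cv g g' = (cu : H →ₗ[k] P)) (h2 : cv g' g = (cu : H →ₗ[k] P)) :
    ΔP ∘ₗ g' = adCoact g' := by
  have eΔcu : ΔP ∘ₗ (cu (H := H) (A := P)) = cu := by
    ext h
    simp [cu, Algebra.algebraMap_eq_smul_one, map_smul, hP.map_one]
  have A1 : cv (imap (k := k) (P := P) (H := H))
      (imap ∘ₗ HopfAlgebra.antipode (R := k)) = cu := by
    have := push_cv (imap (k := k) (P := P) (H := H)) imap_mul LinearMap.id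
      (HopfAlgebra.antipode (R := k))
    rw [cv_id_antipode, imap_cu, LinearMap.comp_id] at this
    exact this.symm
  have A2 : cv (imap (k := k) (P := P) (H := H) ∘ₗ HopfAlgebra.antipode (R := k)) imap = cu := by
    have := push_cv (imap (k := k) (P := P) (H := H)) imap_mul
      (HopfAlgebra.antipode (R := k)) LinearMap.id
    rw [cv_antipode_id, imap_cu, LinearMap.comp_id] at this
    exact this.symm
  have A3 : cv (jmap (k := k) (P := P) (H := H) ∘ₗ g) (jmap ∘ₗ g') = cu := by
    have := push_cv (jmap (k := k) (P := P) (H := H)) jmap_mul g g'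
    rw [h1, jmap_cu] at this
    exact this.symm
  have A1' : ∀ Y : H →ₗ[k] P ⊗[k] H,
      cv (imap (k := k) (P := P) (H := H))
        (cv (imap ∘ₗ HopfAlgebra.antipode (R := k)) Y) = Y := by
    intro Y
    rw [← cv_assoc, A1, cv_cu_left]
  have e3 : cv (adCoact g) (adCoact g') = (cu : H →ₗ[k] P ⊗[k] H) := by
    rw [adCoact_factor, adCoact_factor]
    calc cv (cv (imap ∘ₗ HopfAlgebra.antipode (R := k)) (cv (jmap ∘ₗ g) imap))
          (cv (imap ∘ₗ HopfAlgebra.antipode (R := k)) (cv (jmap ∘ₗ g') imap))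
        = cv (imap ∘ₗ HopfAlgebra.antipode (R := k))
            (cv (jmap ∘ₗ g) (cv imap
              (cv (imap ∘ₗ HopfAlgebra.antipode (R := k)) (cv (jmap ∘ₗ g') imap)))) := by
          rw [cv_assoc, cv_assoc]
      _ = cv (imap ∘ₗ HopfAlgebra.antipode (R := k))
            (cv (jmap ∘ₗ g) (cv (jmap ∘ₗ g') imap)) := by rw [A1']
      _ = cv (imap ∘ₗ HopfAlgebra.antipode (R := k))
            (cv (cv (jmap ∘ₗ g) (jmap ∘ₗ g')) imap) := by rw [cv_assoc]
      _ = cv (imap ∘ₗ HopfAlgebra.antipode (R := k)) imap := by rw [A3, cv_cu_left]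
      _ = cu := A2
  have u1 : cv (ΔP ∘ₗ g') (ΔP ∘ₗ g) = (cu : H →ₗ[k] P ⊗[k] H) := by
    have := push_cv ΔP hP.map_mul g' g
    rw [h2, eΔcu] at this
    exact this.symm
  symm
  calc adCoact g'
      = cv (cv (ΔP ∘ₗ g') (ΔP ∘ₗ g)) (adCoact g') := by rw [u1, cv_cu_left]
    _ = cv (ΔP ∘ₗ g') (cv (ΔP ∘ₗ g) (adCoact g')) := by rw [cv_assoc]
    _ = cv (ΔP ∘ₗ g') (cv (adCoact g) (adCoact g')) := by rw [hgcoact]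
    _ = ΔP ∘ₗ g' := by rw [e3, cv_cu_right]

/-- Gauge transformation of covariant derivatives conjugates the curvature:
`(D')² = α ∘ D² ∘ α⁻¹`, and if `D²(f) = Σ f₀ Ω(f₁)` then
`(D')²(f) = Σ f₀ g⁻¹(f₁) Ω(f₂) g(f₃)`. -/
theorem statement_14 (ΔP : P →ₗ[k] P ⊗[k] H) (hP : IsComodAlg ΔP)
    (hS : Function.Bijective (HopfAlgebra.antipode (R := k) (A := H)))
    (g g' : H →ₗ[k] P) (hg1 : g 1 = 1)
    (hgcoact : ΔP ∘ₗ g = adCoact g)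
    (hinv : conv g g' = (convUnit : H →ₗ[k] P) ∧
            conv g' g = (convUnit : H →ₗ[k] P))
    (D : P →ₗ[k] P) :
    ((act ΔP g ∘ₗ D ∘ₗ act ΔP g') ∘ₗ (act ΔP g ∘ₗ D ∘ₗ act ΔP g')
      = act ΔP g ∘ₗ (D ∘ₗ D) ∘ₗ act ΔP g') ∧
    (∀ Ω : H →ₗ[k] P, ΔP ∘ₗ Ω = adCoact Ω →
      D ∘ₗ D = act ΔP Ω →
      (act ΔP g ∘ₗ D ∘ₗ act ΔP g') ∘ₗ (act ΔP g ∘ₗ D ∘ₗ act ΔP g')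
        = act ΔP (conv (conv g' Ω) g)) := by
  have hact : ∀ x : H →ₗ[k] P, act ΔP x = ca ΔP LinearMap.id x := fun _ => rfl
  have hg'coact : ΔP ∘ₗ g' = adCoact g' :=
    L3 hP g g' hgcoact hinv.1 hinv.2
  have hβα : act ΔP g' ∘ₗ act ΔP g = LinearMap.id := by
    rw [hact, hact, L17 hP g' g hgcoact]
    have h1 : cv g g' = (cu : H →ₗ[k] P) := hinv.1
    rw [h1]
    exact ca_cu hP _
  have hmid : ∀ X : P →ₗ[k] P, act ΔP g' ∘ₗ (act ΔP g ∘ₗ X) = X := by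
    intro X
    rw [← LinearMap.comp_assoc, hβα, LinearMap.id_comp]
  have part1 : (act ΔP g ∘ₗ D ∘ₗ act ΔP g') ∘ₗ (act ΔP g ∘ₗ D ∘ₗ act ΔP g')
      = act ΔP g ∘ₗ (D ∘ₗ D) ∘ₗ act ΔP g' := by
    simp only [LinearMap.comp_assoc]
    rw [hmid]
  refine ⟨part1, ?_⟩
  intro Ω hΩ hDD
  rw [part1, hDD]
  calc act ΔP g ∘ₗ act ΔP Ω ∘ₗ act ΔP g'
      = (act ΔP g ∘ₗ act ΔP Ω) ∘ₗ act ΔP g' := by rw [LinearMap.comp_assoc]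
    _ = ca ΔP LinearMap.id (cv Ω g) ∘ₗ ca ΔP LinearMap.id g' := by
        rw [hact, hact, hact, L17 hP g Ω hΩ]
    _ = ca ΔP LinearMap.id (cv g' (cv Ω g)) := L17 hP (cv Ω g) g' hg'coact
    _ = ca ΔP LinearMap.id (cv (cv g' Ω) g) := by rw [cv_assoc]
    _ = act ΔP (conv (conv g' Ω) g) := rfl
end
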